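/- Consider an N-player game in which each cost function f_i is defined on all of ℝ^{n̄} (n̄ = Σ_i n_i) with strategy sets K_i ⊆ ℝ^{n_i}. Then the game is a potential game if and only if h_P(z, y) = h_P(0, z+y) − h_P(0, z) for all z, y ∈ ℝ^{n̄}; moreover, in that case the function φ(z) = C − h_P(z, −z) (for any constant C) is a potential function of the game. -/
import Mathlib


noncomputable section

/-- The set of joint strategy profiles of a game with strategy sets `K i ⊆ ℝ^{n i}`. -/
def jointK {N : ℕ} {n : Fin N → ℕ}
    (K : ∀ i, Set (EuclideanSpace ℝ (Fin (n i)))) :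
    Set (∀ i, EuclideanSpace ℝ (Fin (n i))) :=
  {x | ∀ i, x i ∈ K i}

/-- `φ` is an exact potential function for the game with strategy sets `K` and costs `f`. -/
def IsPotential {N : ℕ} {n : Fin N → ℕ}
    (K : ∀ i, Set (EuclideanSpace ℝ (Fin (n i))))
    (f : Fin N → (∀ i, EuclideanSpace ℝ (Fin (n i))) → ℝ)
    (φ : (∀ i, EuclideanSpace ℝ (Fin (n i))) → ℝ) : Prop :=
  ∀ i : Fin N, ∀ x ∈ jointK K, ∀ xi' ∈ K i,
    f i (Function.update x i xi') - f i x = φ (Function.update x i xi') - φ x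

/-- The game is a potential game. -/
def IsPotentialGame {N : ℕ} {n : Fin N → ℕ}
    (K : ∀ i, Set (EuclideanSpace ℝ (Fin (n i))))
    (f : Fin N → (∀ i, EuclideanSpace ℝ (Fin (n i))) → ℝ) : Prop :=
  ∃ φ, IsPotential K f φ

/-- The point on the path from `z` to `z + y` whose first `m` blocks are `z j + y j`
and whose remaining blocks are `z j`. -/
def upTo {N : ℕ} {n : Fin N → ℕ}
    (z y : ∀ i, EuclideanSpace ℝ (Fin (n i))) (m : ℕ) :
    ∀ i, EuclideanSpace ℝ (Fin (n i)) :=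
  fun j => if (j : ℕ) < m then z j + y j else z j

/-- `hP f z y` : the sum of the players' incremental cost differences along the path
`z → (z₁+y₁, z₋₁) → (z₁+y₁, z₂+y₂, …) → ⋯ → z+y`. -/
def hP {N : ℕ} {n : Fin N → ℕ}
    (f : Fin N → (∀ i, EuclideanSpace ℝ (Fin (n i))) → ℝ)
    (z y : ∀ i, EuclideanSpace ℝ (Fin (n i))) : ℝ :=
  ∑ i : Fin N, (f i (upTo z y ((i : ℕ) + 1)) - f i (upTo z y (i : ℕ)))

/-- `φ` is a global potential for the cost collection `f` (the potential property holds
on all of `ℝ^{n̄}`). -/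
def IsGlobalPotential {N : ℕ} {n : Fin N → ℕ}
    (f : Fin N → (∀ i, EuclideanSpace ℝ (Fin (n i))) → ℝ)
    (φ : (∀ i, EuclideanSpace ℝ (Fin (n i))) → ℝ) : Prop :=
  ∀ (i : Fin N) (x : ∀ j, EuclideanSpace ℝ (Fin (n j))) (xi' : EuclideanSpace ℝ (Fin (n i))),
    f i (Function.update x i xi') - f i x = φ (Function.update x i xi') - φ x

lemma upTo_zero {N : ℕ} {n : Fin N → ℕ} (z y : ∀ i, EuclideanSpace ℝ (Fin (n i))) :
    upTo z y 0 = z := by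
  funext j; simp [upTo]

lemma upTo_top {N : ℕ} {n : Fin N → ℕ} (z y : ∀ i, EuclideanSpace ℝ (Fin (n i))) :
    upTo z y N = z + y := by
  funext j; simp [upTo, j.isLt]

lemma upTo_succ {N : ℕ} {n : Fin N → ℕ} (z y : ∀ i, EuclideanSpace ℝ (Fin (n i)))
    (i : Fin N) :
    upTo z y ((i : ℕ) + 1) = Function.update (upTo z y (i : ℕ)) i (z i + y i) := by
  funext j
  rcases eq_or_ne j i with rfl | h
  · simp [upTo]
  · have hne : (j : ℕ) ≠ (i : ℕ) := fun hh => h (Fin.ext hh)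
    have hiff : ((j : ℕ) < (i : ℕ) + 1) ↔ ((j : ℕ) < (i : ℕ)) := by omega
    simp [upTo, Function.update_of_ne h, hiff]

lemma hP_eq {N : ℕ} {n : Fin N → ℕ}
    (f : Fin N → (∀ i, EuclideanSpace ℝ (Fin (n i))) → ℝ)
    (φ : (∀ i, EuclideanSpace ℝ (Fin (n i))) → ℝ)
    (hφ : IsGlobalPotential f φ)
    (z y : ∀ i, EuclideanSpace ℝ (Fin (n i))) :
    hP f z y = φ (z + y) - φ z := by
  have h1 : ∀ i : Fin N, f i (upTo z y ((i : ℕ) + 1)) - f i (upTo z y (i : ℕ))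
      = φ (upTo z y ((i : ℕ) + 1)) - φ (upTo z y (i : ℕ)) := by
    intro i
    rw [upTo_succ]
    exact hφ i (upTo z y (i : ℕ)) (z i + y i)
  unfold hP
  rw [Finset.sum_congr rfl (fun i _ => h1 i)]
  calc ∑ i : Fin N, (φ (upTo z y ((i : ℕ) + 1)) - φ (upTo z y (i : ℕ)))
      = ∑ m ∈ Finset.range N, (φ (upTo z y (m + 1)) - φ (upTo z y m)) :=
        Fin.sum_univ_eq_sum_range (fun m => φ (upTo z y (m + 1)) - φ (upTo z y m)) N
    _ = φ (upTo z y N) - φ (upTo z y 0) := Finset.sum_range_sub (fun m => φ (upTo z y m)) N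
    _ = φ (z + y) - φ z := by rw [upTo_top, upTo_zero]

lemma global_of_hP {N : ℕ} {n : Fin N → ℕ}
    (f : Fin N → (∀ i, EuclideanSpace ℝ (Fin (n i))) → ℝ)
    (H : ∀ z y : ∀ i, EuclideanSpace ℝ (Fin (n i)),
      hP f z y = hP f 0 (z + y) - hP f 0 z) :
    IsGlobalPotential f (fun z => hP f 0 z) := by
  intro i x xi'
  set y : ∀ j, EuclideanSpace ℝ (Fin (n j)) := Function.update 0 i (xi' - x i) with hy
  have hyi : y i = xi' - x i := by simp [hy]
  have hzy : x + y = Function.update x i xi' := by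
    funext j
    rcases eq_or_ne j i with rfl | h
    · simp [hy]
    · simp [hy, Function.update_of_ne h]
  have hA : upTo x y (i : ℕ) = x := by
    funext j
    rcases eq_or_ne j i with rfl | h
    · simp [upTo]
    · simp [upTo, hy, Function.update_of_ne h]
  have hB : upTo x y ((i : ℕ) + 1) = Function.update x i xi' := by
    have h2 : x i + (xi' - x i) = xi' := by abel
    rw [upTo_succ, hA, hyi, h2]
  have hstep : ∀ j : Fin N, j ≠ i → upTo x y ((j : ℕ) + 1) = upTo x y (j : ℕ) := by
    intro j hj
    have hyj : y j = 0 := by simp [hy, Function.update_of_ne hj]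
    have hx : upTo x y (j : ℕ) j = x j := by simp [upTo]
    rw [upTo_succ, hyj, add_zero, ← hx, Function.update_eq_self]
  have hsum : hP f x y = f i (Function.update x i xi') - f i x := by
    unfold hP
    rw [Finset.sum_eq_single i]
    · rw [hB, hA]
    · intro j _ hj; rw [hstep j hj]; ring
    · intro h; exact absurd (Finset.mem_univ i) h
  have := H x y
  rw [hsum, hzy] at this
  simpa using this

/-- If the costs are defined on all of `ℝ^{n̄}`, the game is a potential
game iff `h_P(z,y) = h_P(0,z+y) − h_P(0,z)` for all `z, y ∈ ℝ^{n̄}`; moreover, in that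
case `φ(z) = C − h_P(z,−z)` is a potential function (for any constant `C`). -/
theorem stmt7 {N : ℕ} {n : Fin N → ℕ}
    (K : ∀ i, Set (EuclideanSpace ℝ (Fin (n i))))
    (f : Fin N → (∀ i, EuclideanSpace ℝ (Fin (n i))) → ℝ) :
    ((∃ φ, IsGlobalPotential f φ) ↔
      ∀ z y : ∀ i, EuclideanSpace ℝ (Fin (n i)),
        hP f z y = hP f 0 (z + y) - hP f 0 z)
    ∧ ((∃ φ, IsGlobalPotential f φ) →
        ∀ C : ℝ, IsGlobalPotential f (fun z => C - hP f z (-z))) := by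
  constructor
  · constructor
    · rintro ⟨φ, hφ⟩ z y
      rw [hP_eq f φ hφ, hP_eq f φ hφ, hP_eq f φ hφ, zero_add, zero_add]
      ring
    · intro H
      exact ⟨fun z => hP f 0 z, global_of_hP f H⟩
  · rintro ⟨φ, hφ⟩ C i x xi'
    simp only
    rw [hP_eq f φ hφ, hP_eq f φ hφ, add_neg_cancel, add_neg_cancel]
    have := hφ i x xi'
    linarith
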